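/- arXiv:2111.13329 — 2 statements merged into one kernel-verified Lean document; each statement's English description precedes it below -/
import Mathlib

section
/- Let α > 0, β̃ > 0, and u ∈ ℝ. Define f : (0,∞) → ℝ by f(θ) = θ/α − β̃·log(θ/α) + u²/(2θ). Then θ* = α·(β̃/2 + √(β̃²/4 + u²/(2α))) is the unique global minimizer of f on (0,∞). -/
theorem stmt_0 (α βt u : ℝ) (hα : 0 < α) (hβ : 0 < βt)
    (f : ℝ → ℝ)
    (hf : ∀ θ, f θ = θ / α - βt * Real.log (θ / α) + u ^ 2 / (2 * θ))
    (θstar : ℝ)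
    (hθ : θstar = α * (βt / 2 + Real.sqrt (βt ^ 2 / 4 + u ^ 2 / (2 * α)))) :
    0 < θstar ∧ ∀ θ, 0 < θ → θ ≠ θstar → f θstar < f θ := by
  have harg : (0:ℝ) ≤ βt ^ 2 / 4 + u ^ 2 / (2 * α) := by positivity
  have hsq := Real.sq_sqrt harg
  have hs : βt / 2 ≤ Real.sqrt (βt ^ 2 / 4 + u ^ 2 / (2 * α)) := by
    rw [show βt / 2 = Real.sqrt ((βt/2)^2) from (Real.sqrt_sq (by positivity)).symm]
    apply Real.sqrt_le_sqrt
    nlinarith [div_nonneg (sq_nonneg u) (by positivity : (0:ℝ) ≤ 2 * α)]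
  have hθab : α * βt ≤ θstar := by rw [hθ]; nlinarith
  have hθpos : 0 < θstar := lt_of_lt_of_le (by positivity) hθab
  have hsq2 : Real.sqrt (βt ^ 2 / 4 + u ^ 2 / (2 * α)) ^ 2 * (2 * α)
      = βt ^ 2 / 4 * (2 * α) + u ^ 2 := by
    rw [hsq]; field_simp
  have key : θstar ^ 2 = α * βt * θstar + α * u ^ 2 / 2 := by
    rw [hθ]; linear_combination (α / 2) * hsq2
  -- derivative
  have hfe : f = fun θ => θ / α - βt * Real.log (θ / α) + u ^ 2 / (2 * θ) :=
    funext hf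
  have hderiv : ∀ x : ℝ, 0 < x →
      HasDerivAt f ((2 * x ^ 2 - 2 * α * βt * x - α * u ^ 2) / (2 * α * x ^ 2)) x := by
    intro x hx
    have h1 : HasDerivAt (fun θ : ℝ => θ / α) (1 / α) x := by
      simpa using (hasDerivAt_id x).div_const α
    have h2 : HasDerivAt (fun θ : ℝ => βt * Real.log (θ / α))
        (βt * ((1 / α) / (x / α))) x :=
      (h1.log (div_ne_zero hx.ne' hα.ne')).const_mul βt
    have h3 : HasDerivAt (fun θ : ℝ => u ^ 2 / (2 * θ))
        ((0 * (2 * x) - u ^ 2 * 2) / (2 * x) ^ 2) x :=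
      (hasDerivAt_const x (u ^ 2)).div (by simpa using (hasDerivAt_id x).const_mul 2)
        (by positivity)
    rw [hfe]
    refine ((h1.sub h2).add h3).congr_deriv ?_
    field_simp [hα.ne', hx.ne']
    ring
  have hderiv' : ∀ x : ℝ, 0 < x →
      deriv f x = (2 * x ^ 2 - 2 * α * βt * x - α * u ^ 2) / (2 * α * x ^ 2) :=
    fun x hx => (hderiv x hx).deriv
  have hcont : ∀ x : ℝ, 0 < x → ContinuousAt f x :=
    fun x hx => (hderiv x hx).continuousAt
  -- strict anti on Ioc 0 θstar
  have hanti : StrictAntiOn f (Set.Ioc 0 θstar) := by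
    apply strictAntiOn_of_deriv_neg (convex_Ioc 0 θstar)
    · exact fun x hx => (hcont x hx.1).continuousWithinAt
    · intro x hx
      rw [interior_Ioc] at hx
      rw [hderiv' x hx.1]
      apply div_neg_of_neg_of_pos
      · nlinarith [key, mul_pos (sub_pos.mpr hx.2)
          (show 0 < x + θstar - α * βt by linarith [hx.1])]
      · exact mul_pos (by linarith) (pow_pos hx.1 2)
  have hmono : StrictMonoOn f (Set.Ici θstar) := by
    apply strictMonoOn_of_deriv_pos (convex_Ici θstar)
    · exact fun x hx => (hcont x (lt_of_lt_of_le hθpos hx)).continuousWithinAt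
    · intro x hx
      rw [interior_Ici] at hx
      have hxpos : 0 < x := lt_trans hθpos hx
      rw [hderiv' x hxpos]
      have hx' : θstar < x := hx
      apply div_pos
      · nlinarith [key, mul_pos (sub_pos.mpr hx')
          (show 0 < x + θstar - α * βt by linarith)]
      · exact mul_pos (by linarith) (pow_pos hxpos 2)
  refine ⟨hθpos, fun θ hθ0 hne => ?_⟩
  rcases lt_or_gt_of_ne hne with h | h
  · exact hanti ⟨hθ0, h.le⟩ ⟨hθpos, le_refl _⟩ h
  · exact hmono (Set.self_mem_Ici) h.le h
end

section
/- Let J : ℝᵈ × (0,∞)ᵈ → ℝ be the energy J(u,θ) = (1/2)‖y−Au‖²_Γ + (1/2)Σᵢ uᵢ²/θᵢ + Σᵢ[θᵢ/αᵢ − β̃·log(θᵢ/αᵢ)] with β̃ > 0, αᵢ > 0, Γ positive definite. Then J is convex on ℝᵈ × (0,∞)ᵈ. -/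
open Matrix

private lemma pos_comb {a b t t' : ℝ} (ha : 0 ≤ a) (hb : 0 ≤ b) (hab : a + b = 1)
    (ht : 0 < t) (ht' : 0 < t') : 0 < a * t + b * t' := by
  rcases eq_or_lt_of_le ha with h | h
  · have hb1 : b = 1 := by linarith
    rw [← h, hb1]; simpa using ht'
  · nlinarith [mul_nonneg hb ht'.le]

private lemma quad_convex (n : ℕ) (M : Matrix (Fin n) (Fin n) ℝ) (hM : M.PosSemidef) :
    ConvexOn ℝ Set.univ (fun v : Fin n → ℝ => v ⬝ᵥ M.mulVec v) := by
  refine ⟨convex_univ, fun x _ z _ a b ha hb hab => ?_⟩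
  have hMt : Mᵀ = M := by
    rw [← Matrix.conjTranspose_eq_transpose_of_trivial, hM.1.eq]
  have hsym : ∀ u v : Fin n → ℝ, u ⬝ᵥ M.mulVec v = v ⬝ᵥ M.mulVec u := by
    intro u v
    rw [dotProduct_mulVec, ← Matrix.mulVec_transpose, hMt, dotProduct_comm]
  have hnn : 0 ≤ (x - z) ⬝ᵥ M.mulVec (x - z) := by simpa using hM.dotProduct_mulVec_nonneg (x - z)
  have hexp : (x - z) ⬝ᵥ M.mulVec (x - z)
      = x ⬝ᵥ M.mulVec x - 2 * (x ⬝ᵥ M.mulVec z) + z ⬝ᵥ M.mulVec z := by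
    simp only [Matrix.mulVec_sub, dotProduct_sub, sub_dotProduct, hsym z x]; ring
  have h2 : (a • x + b • z) ⬝ᵥ M.mulVec (a • x + b • z)
      = a^2 * (x ⬝ᵥ M.mulVec x) + 2*a*b*(x ⬝ᵥ M.mulVec z) + b^2 * (z ⬝ᵥ M.mulVec z) := by
    rw [Matrix.mulVec_add, Matrix.mulVec_smul, Matrix.mulVec_smul]
    simp only [dotProduct_add, add_dotProduct, dotProduct_smul, smul_dotProduct,
      smul_eq_mul, hsym z x]
    ring
  simp only [smul_eq_mul]
  rw [h2]
  have hb' : b = 1 - a := by linarith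
  subst hb'
  nlinarith [mul_nonneg (mul_nonneg ha hb) (le_of_le_of_eq hnn hexp)]

private lemma sq_div_ineq (x x' t t' a b : ℝ) (ht : 0 < t) (ht' : 0 < t')
    (ha : 0 ≤ a) (hb : 0 ≤ b) (hab : a + b = 1) :
    (a*x+b*x')^2/(a*t+b*t') ≤ a*(x^2/t) + b*(x'^2/t') := by
  have hs : 0 < a*t+b*t' := pos_comb ha hb hab ht ht'
  have h1 : a*(x^2/t) + b*(x'^2/t') = (a*x^2*t' + b*x'^2*t)/(t*t') := by
    field_simp
  rw [h1, div_le_div_iff₀ hs (by positivity)]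
  nlinarith [mul_nonneg (mul_nonneg ha hb) (sq_nonneg (x*t'-x'*t))]

private lemma log_term_ineq (c c' al bt a b : ℝ) (hc : 0 < c) (hc' : 0 < c')
    (hal : 0 < al) (hbt : 0 < bt) (ha : 0 ≤ a) (hb : 0 ≤ b) (hab : a + b = 1) :
    (a*c+b*c')/al - bt * Real.log ((a*c+b*c')/al)
      ≤ a*(c/al - bt * Real.log (c/al)) + b*(c'/al - bt * Real.log (c'/al)) := by
  have hmem : c/al ∈ Set.Ioi (0:ℝ) := div_pos hc hal
  have hmem' : c'/al ∈ Set.Ioi (0:ℝ) := div_pos hc' hal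
  have hlog := strictConcaveOn_log_Ioi.concaveOn.2 hmem hmem' ha hb hab
  simp only [smul_eq_mul] at hlog
  have heq : (a*c+b*c')/al = a * (c/al) + b * (c'/al) := by field_simp
  rw [heq]
  have := mul_le_mul_of_nonneg_left hlog hbt.le
  nlinarith [this]

theorem stmt_8 (n d : ℕ) (A : Matrix (Fin n) (Fin d) ℝ)
    (Γ : Matrix (Fin n) (Fin n) ℝ) (hΓ : Γ.PosDef) (y : Fin n → ℝ)
    (α : Fin d → ℝ) (hα : ∀ i, 0 < α i) (βt : ℝ) (hβ : 0 < βt)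
    (J : (Fin d → ℝ) × (Fin d → ℝ) → ℝ)
    (hJ : ∀ p, J p =
      (1 / 2) * ((y - A.mulVec p.1) ⬝ᵥ Γ⁻¹.mulVec (y - A.mulVec p.1)) +
      (1 / 2) * ∑ i, (p.1 i) ^ 2 / p.2 i +
      ∑ i, (p.2 i / α i - βt * Real.log (p.2 i / α i))) :
    ConvexOn ℝ {p : (Fin d → ℝ) × (Fin d → ℝ) | ∀ i, 0 < p.2 i} J := by
  have hM : (Γ⁻¹).PosSemidef := hΓ.inv.posSemidef
  constructor
  · intro p hp q hq a b ha hb hab i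
    simp only [Prod.snd_add, Prod.smul_snd, Pi.add_apply, Pi.smul_apply, smul_eq_mul]
    exact pos_comb ha hb hab (hp i) (hq i)
  · intro p hp q hq a b ha hb hab
    rw [hJ, hJ, hJ]
    simp only [Prod.fst_add, Prod.snd_add, Prod.smul_fst, Prod.smul_snd, smul_eq_mul]
    set w := y - A.mulVec p.1 with hw
    set w' := y - A.mulVec q.1 with hw'
    -- affine identity
    have haff : y - A.mulVec (a • p.1 + b • q.1) = a • w + b • w' := by
      funext i
      simp only [hw, hw', Matrix.mulVec_add, Matrix.mulVec_smul, Pi.sub_apply, Pi.add_apply,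
        Pi.smul_apply, smul_eq_mul]
      linear_combination (-(y i)) * hab
    -- term 1
    have h1 : (y - A.mulVec (a • p.1 + b • q.1)) ⬝ᵥ
        Γ⁻¹.mulVec (y - A.mulVec (a • p.1 + b • q.1))
        ≤ a * (w ⬝ᵥ Γ⁻¹.mulVec w) + b * (w' ⬝ᵥ Γ⁻¹.mulVec w') := by
      rw [haff]
      simpa using (quad_convex n Γ⁻¹ hM).2 (Set.mem_univ w) (Set.mem_univ w') ha hb hab
    -- term 2
    have h2 : ∑ i, ((a • p.1 + b • q.1) i) ^ 2 / ((a • p.2 + b • q.2) i)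
        ≤ a * (∑ i, (p.1 i)^2 / p.2 i) + b * (∑ i, (q.1 i)^2 / q.2 i) := by
      rw [Finset.mul_sum, Finset.mul_sum, ← Finset.sum_add_distrib]
      refine Finset.sum_le_sum fun i _ => ?_
      simpa [mul_div_assoc] using
        sq_div_ineq (p.1 i) (q.1 i) (p.2 i) (q.2 i) a b (hp i) (hq i) ha hb hab
    -- term 3
    have h3 : ∑ i, ((a • p.2 + b • q.2) i / α i
          - βt * Real.log ((a • p.2 + b • q.2) i / α i))
        ≤ a * (∑ i, (p.2 i / α i - βt * Real.log (p.2 i / α i)))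
          + b * (∑ i, (q.2 i / α i - βt * Real.log (q.2 i / α i))) := by
      rw [Finset.mul_sum, Finset.mul_sum, ← Finset.sum_add_distrib]
      refine Finset.sum_le_sum fun i _ => ?_
      simpa using log_term_ineq (p.2 i) (q.2 i) (α i) βt a b (hp i) (hq i) (hα i) hβ ha hb hab
    have h12 : (0:ℝ) < 1/2 := by norm_num
    nlinarith [h1, h2, h3]
end
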